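/- Let D and J be linear endomorphisms of a vector space of smooth vector fields such that J^{k+1} = 0 and J∘D∘J = J²∘D - J (the bracket identity J L_S J = J² L_S - J for the order-k tangent structure). Define π = Σ_{α=0}^{k} (1/α!) J^α ∘ D^α. Then (J∘D)∘π = 0, i.e. the image of π is contained in the kernel of J∘D. -/

import Mathlib

open scoped BigOperators

/-- Operator-theoretic core of Lemma 3.3: if `J^{k+1} = 0` and
`J∘D∘J = J²∘D - J`, then the operator `π = Σ_{α=0}^k (1/α!) J^α∘D^α`
satisfies `(J∘D)∘π = 0`, i.e. `Im π ⊆ Ker (J∘D)`. -/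
theorem stmt10 {M : Type*} [AddCommGroup M] [Module ℝ M]
    (k : ℕ) (D J : M →ₗ[ℝ] M)
    (hJ : J ^ (k + 1) = 0)
    (hDJ : J ∘ₗ D ∘ₗ J = (J ^ 2) ∘ₗ D - J) :
    (J ∘ₗ D) ∘ₗ
        (∑ α ∈ Finset.range (k + 1),
          ((α.factorial : ℝ))⁻¹ • ((J ^ α) ∘ₗ (D ^ α))) = 0 := by
  have h2 : J * D * J = J ^ 2 * D - J := by
    simpa [Module.End.mul_eq_comp, mul_assoc, LinearMap.comp_assoc] using hDJ
  have key : ∀ α : ℕ, J * D * J ^ α = J ^ (α + 1) * D - (α : ℝ) • J ^ α := by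
    intro α
    induction α with
    | zero => simp
    | succ n ih =>
      have e1 : J * D * J ^ (n + 1) = (J * D * J ^ n) * J := by
        rw [pow_succ, ← mul_assoc]
      rw [e1, ih, sub_mul, smul_mul_assoc, ← pow_succ]
      have e2 : J ^ (n + 1) * D * J = J ^ n * (J * D * J) := by
        rw [pow_succ, mul_assoc J D J, mul_assoc, mul_assoc]
      rw [e2, h2, mul_sub, ← mul_assoc, ← pow_add, ← pow_succ]
      have hnn : n + 2 = n + 1 + 1 := rfl
      rw [hnn]
      push_cast
      rw [add_smul, one_smul, sub_sub, add_comm (J ^ (n + 1))]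
  set h : ℕ → (M →ₗ[ℝ] M) :=
    fun α => ((α : ℝ) / (α.factorial : ℝ)) • (J ^ α * D ^ α) with hh
  have term : ∀ α ∈ Finset.range (k + 1),
      (J ∘ₗ D) ∘ₗ (((α.factorial : ℝ))⁻¹ • ((J ^ α) ∘ₗ (D ^ α)))
        = h (α + 1) - h α := by
    intro α _
    simp only [← Module.End.mul_eq_comp, hh]
    rw [mul_smul_comm, ← mul_assoc, key α, sub_mul, smul_mul_assoc, smul_sub,
      smul_smul, mul_assoc, ← pow_succ']
    have hf : (α.factorial : ℝ) ≠ 0 := Nat.cast_ne_zero.mpr α.factorial_ne_zero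
    congr 1
    · congr 1
      rw [Nat.factorial_succ]
      push_cast
      have hα : (α : ℝ) + 1 ≠ 0 := by positivity
      field_simp
    · congr 1
      rw [div_eq_mul_inv, mul_comm]
  simp only [← Module.End.mul_eq_comp] at term ⊢
  rw [Finset.mul_sum, Finset.sum_congr rfl term, Finset.sum_range_sub]
  simp [hh, hJ]
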